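/- arXiv:2507.20330 — 4 statements merged into one kernel-verified Lean document; each statement's English description precedes it below -/
import Mathlib

section
/- Let n ≥ 2, λ > 0, and let g : (0,∞) → ℝ be nonnegative and measurable with ∫₀^∞ g(r) dr ≤ A and g(r) ≤ B for all r, where A, B > 0 satisfy A/B < √((n+2)λ/n). Then ∫₀^∞ (λrⁿ/n − r^(n+2)/(n+2)) g(r) dr ≤ B·(λ[(t+A/B)^(n+1) − t^(n+1)]/(n(n+1)) − [(t+A/B)^(n+3) − t^(n+3)]/((n+2)(n+3))), where t < √λ is such that t + A/B > √λ and λ[(t+A/B)ⁿ − tⁿ]/n = [(t+A/B)^(n+2) − t^(n+2)]/(n+2). -/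
open Real Set MeasureTheory

set_option maxHeartbeats 1000000


lemma pow_ineq {u s : ℝ} (m : ℕ) (hu : 0 < u) (hus : u < s) :
    s ^ (m + 4) - u ^ (m + 4) < (u + s) ^ 2 * (s ^ (m + 2) - u ^ (m + 2)) := by
  have hY : 0 < u ^ m := pow_pos hu m
  have hXY : u ^ m ≤ s ^ m := pow_le_pow_left₀ hu.le hus.le m
  have e1 : s ^ (m + 4) = s ^ m * s ^ 4 := by ring
  have e2 : u ^ (m + 4) = u ^ m * u ^ 4 := by ring
  have e3 : s ^ (m + 2) = s ^ m * s ^ 2 := by ring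
  have e4 : u ^ (m + 2) = u ^ m * u ^ 2 := by ring
  rw [e1, e2, e3, e4]
  nlinarith [mul_pos hu (hu.trans hus), mul_pos hY (mul_pos hu (hu.trans hus)),
    mul_lt_mul_of_pos_left (mul_lt_mul_of_pos_left hus hu) hY,
    mul_le_mul_of_nonneg_right hXY (sq_nonneg s), sq_nonneg (u - s), sq_nonneg (u + s)]

lemma phi_deriv (n : ℕ) (hn : 1 ≤ n) (lam : ℝ) (r : ℝ) :
    HasDerivAt (fun x : ℝ => lam * x ^ n / n - x ^ (n + 2) / (n + 2))
      (r ^ (n - 1) * (lam - r ^ 2)) r := by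
  obtain ⟨m, rfl⟩ : ∃ m, n = m + 1 := ⟨n - 1, by omega⟩
  have h1 := hasDerivAt_pow (m + 1) r
  have h2 := hasDerivAt_pow (m + 3) r
  have H := ((h1.const_mul lam).div_const ((m + 1 : ℕ) : ℝ)).sub
    (h2.div_const (((m + 1 : ℕ) : ℝ) + 2))
  have hm1 : ((m + 1 : ℕ) : ℝ) ≠ 0 := by positivity
  have hm3 : ((m + 1 : ℕ) : ℝ) + 2 ≠ 0 := by positivity
  refine H.congr_deriv ?_
  simp only [Nat.add_sub_cancel]
  push_cast
  field_simp
  ring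

lemma phi_cont (n : ℕ) (lam : ℝ) :
    Continuous (fun x : ℝ => lam * x ^ n / n - x ^ (n + 2) / (n + 2)) := by
  fun_prop

lemma phi_mono (n : ℕ) (hn : 1 ≤ n) (lam : ℝ) (hlam : 0 < lam) :
    MonotoneOn (fun x : ℝ => lam * x ^ n / n - x ^ (n + 2) / (n + 2))
      (Icc 0 (Real.sqrt lam)) := by
  apply (strictMonoOn_of_deriv_pos (convex_Icc _ _)
    (phi_cont n lam).continuousOn ?_).monotoneOn
  intro r hr
  rw [interior_Icc, mem_Ioo] at hr
  rw [(phi_deriv n hn lam r).deriv]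
  have h2 : r ^ 2 < lam := by
    have := (Real.lt_sqrt hr.1.le).mp hr.2
    linarith
  have := pow_pos hr.1 (n - 1)
  nlinarith

lemma phi_anti (n : ℕ) (hn : 1 ≤ n) (lam : ℝ) (hlam : 0 < lam) :
    AntitoneOn (fun x : ℝ => lam * x ^ n / n - x ^ (n + 2) / (n + 2))
      (Ici (Real.sqrt lam)) := by
  apply (strictAntiOn_of_deriv_neg (convex_Ici _)
    (phi_cont n lam).continuousOn ?_).antitoneOn
  intro r hr
  rw [interior_Ici, mem_Ioi] at hr
  rw [(phi_deriv n hn lam r).deriv]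
  have hr0 : 0 < r := lt_of_le_of_lt (Real.sqrt_nonneg lam) hr
  have h2 : lam < r ^ 2 := by
    have := (Real.sqrt_lt' hr0).mp hr
    linarith
  have := pow_pos hr0 (n - 1)
  nlinarith

lemma phi_ftc (n : ℕ) (hn : 1 ≤ n) (lam a b : ℝ) :
    ∫ r in a..b, (lam * r ^ n / n - r ^ (n + 2) / (n + 2))
      = lam * (b ^ (n + 1) - a ^ (n + 1)) / (n * (n + 1))
        - (b ^ (n + 3) - a ^ (n + 3)) / ((n + 2) * (n + 3)) := by
  have e : ∀ r : ℝ, lam * r ^ n / n - r ^ (n + 2) / (n + 2)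
      = (lam / n) * r ^ n - (1 / ((n : ℝ) + 2)) * r ^ (n + 2) := by
    intro r; ring
  simp_rw [e]
  rw [intervalIntegral.integral_sub ((intervalIntegral.intervalIntegrable_pow n).const_mul _)
    ((intervalIntegral.intervalIntegrable_pow (n + 2)).const_mul _),
    intervalIntegral.integral_const_mul, intervalIntegral.integral_const_mul,
    integral_pow, integral_pow]
  have h1 : ((n : ℝ)) ≠ 0 := by positivity
  have h2 : ((n : ℝ)) + 1 ≠ 0 := by positivity
  have h3 : ((n : ℝ)) + 2 ≠ 0 := by positivity
  have h4 : ((n : ℝ)) + 3 ≠ 0 := by positivity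
  push_cast
  field_simp
  ring

lemma t_pos (n : ℕ) (hn : 2 ≤ n) (lam t d : ℝ) (hlam : 0 < lam)
    (hd : 0 < d) (hdR : d < Real.sqrt ((n + 2) * lam / n))
    (ht1 : t < Real.sqrt lam) (ht2 : Real.sqrt lam < t + d)
    (ht3 : lam * ((t + d) ^ n - t ^ n) / n = ((t + d) ^ (n + 2) - t ^ (n + 2)) / (n + 2)) :
    0 < t := by
  by_contra ht
  push_neg at ht
  set s := t + d with hs_def
  set R := Real.sqrt ((n + 2) * lam / n) with hR_def
  have hn0 : (0 : ℝ) < n := by positivity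
  have hn2 : (2 : ℝ) ≤ (n : ℝ) := by exact_mod_cast hn
  have hR2 : R ^ 2 = (n + 2) * lam / n := Real.sq_sqrt (by positivity)
  have hR0 : 0 < R := Real.sqrt_pos.mpr (by positivity)
  have hsl : Real.sqrt lam < s := ht2
  have hs0 : 0 < s := lt_trans (Real.sqrt_pos.mpr hlam) hsl
  have hs2 : lam < s ^ 2 := by
    have := (Real.sqrt_lt' hs0).mp hsl; linarith
  have hsd : s ≤ d := by rw [hs_def]; linarith
  have hsR : s < R := lt_of_le_of_lt hsd hdR
  have hd2 : d ^ 2 < R ^ 2 := by nlinarith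
  have hR2le : (n : ℝ) * R ^ 2 = (n + 2) * lam := by
    rw [hR2]; field_simp
  have E : lam * (s ^ n - t ^ n) * (n + 2) = n * (s ^ (n + 2) - t ^ (n + 2)) := by
    have h2 : ((n : ℝ)) + 2 ≠ 0 := by positivity
    have h1 : ((n : ℝ)) ≠ 0 := ne_of_gt hn0
    field_simp at ht3
    linarith
  set u := -t with hu_def
  have hu0 : 0 ≤ u := by rw [hu_def]; linarith
  have hus : u + s = d := by rw [hu_def, hs_def]; ring
  rcases eq_or_lt_of_le hu0 with h0 | hu
  · -- t = 0
    have htz : t = 0 := by rw [hu_def] at h0; linarith [h0.symm]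
    rw [htz] at E
    have hz : (0:ℝ) ^ n = 0 := zero_pow (by omega)
    have hz2 : (0:ℝ) ^ (n + 2) = 0 := zero_pow (by omega)
    rw [hz, hz2] at E
    have hsn : 0 < s ^ n := pow_pos hs0 n
    have hpow : s ^ (n + 2) = s ^ n * s ^ 2 := by ring
    rw [hpow] at E
    have hc : lam * (n + 2) = (n : ℝ) * s ^ 2 := by
      have h' : (lam * ((n : ℝ) + 2)) * s ^ n = ((n : ℝ) * s ^ 2) * s ^ n := by
        linarith [E]
      exact mul_right_cancel₀ (ne_of_gt hsn) h'
    have h1 : 0 < (R - s) * (R + s) := mul_pos (sub_pos.mpr hsR) (by linarith)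
    have h2 : s ^ 2 < R ^ 2 := by nlinarith [h1]
    linarith [hc, hR2le, mul_lt_mul_of_pos_left h2 hn0]
  · -- u > 0
    have htu : t = -u := by rw [hu_def]; ring
    rcases Nat.even_or_odd n with he | ho
    · -- n even
      have tn : t ^ n = u ^ n := by rw [htu]; exact he.neg_pow u
      have tn2 : t ^ (n + 2) = u ^ (n + 2) := by
        rw [htu]; exact (he.add even_two).neg_pow u
      rw [tn, tn2] at E
      rcases le_or_gt s u with hle | hlt
      · -- u ≥ s
        have q1 : 4 * s ^ 2 ≤ d ^ 2 := by
          nlinarith [mul_nonneg (sub_nonneg.mpr hle) (show (0:ℝ) ≤ u + 3 * s by linarith), hus]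
        have q2 : 4 * lam < d ^ 2 := by linarith
        have q3 : (n:ℝ) * d ^ 2 < (n:ℝ) * R ^ 2 := mul_lt_mul_of_pos_left hd2 hn0
        have q4 : 4 * ((n:ℝ) * lam) < (n:ℝ) * d ^ 2 := by
          have := mul_lt_mul_of_pos_left q2 hn0; linarith
        have q5 : 2 * lam ≤ (n:ℝ) * lam := by
          have := mul_le_mul_of_nonneg_right hn2 hlam.le; linarith
        linarith [hR2le]
      · -- u < s
        obtain ⟨m, rfl⟩ : ∃ m, n = m + 2 := ⟨n - 2, by omega⟩
        have key := pow_ineq m hu hlt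
        simp only [show m + 2 + 2 = m + 4 from rfl] at E
        have hXpos : 0 < s ^ (m + 2) - u ^ (m + 2) :=
          sub_pos.mpr (pow_lt_pow_left₀ hlt hu0 (by omega))
        have hA1 : ((m + 2 : ℕ) : ℝ) * (s ^ (m + 4) - u ^ (m + 4))
            < ((m + 2 : ℕ) : ℝ) * ((u + s) ^ 2 * (s ^ (m + 2) - u ^ (m + 2))) :=
          mul_lt_mul_of_pos_left key hn0
        have hA2 : ((m + 2 : ℕ) : ℝ) * (u + s) ^ 2 < (((m + 2 : ℕ) : ℝ) + 2) * lam := by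
          rw [hus]
          have := mul_lt_mul_of_pos_left hd2 hn0
          linarith [hR2le]
        have hA3 : ((m + 2 : ℕ) : ℝ) * (u + s) ^ 2 * (s ^ (m + 2) - u ^ (m + 2))
            < (((m + 2 : ℕ) : ℝ) + 2) * lam * (s ^ (m + 2) - u ^ (m + 2)) :=
          mul_lt_mul_of_pos_right hA2 hXpos
        linarith [hA1, hA3, E]
    · -- n odd
      have tn : t ^ n = -(u ^ n) := by rw [htu]; exact ho.neg_pow u
      have tn2 : t ^ (n + 2) = -(u ^ (n + 2)) := by
        rw [htu]; exact (ho.add_even even_two).neg_pow u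
      rw [tn, tn2] at E
      have hud : u < d := by linarith
      have huR : u < R := lt_trans hud hdR
      have hu2 : u ^ 2 < R ^ 2 := by nlinarith [huR, hu0, hR0]
      have hun : 0 < u ^ n := pow_pos hu n
      have hsn : 0 < s ^ n := pow_pos hs0 n
      have e1 : u ^ (n + 2) = u ^ n * u ^ 2 := by ring
      have e2 : s ^ (n + 2) = s ^ n * s ^ 2 := by ring
      rw [e1, e2] at E
      have hs2R : s ^ 2 < R ^ 2 := by nlinarith [hsR, hs0, hR0]
      have r1 : (n:ℝ) * u ^ 2 < ((n:ℝ) + 2) * lam := by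
        have := mul_lt_mul_of_pos_left hu2 hn0; linarith [hR2le]
      have r2 : ((n:ℝ) * u ^ 2) * u ^ n < (((n:ℝ) + 2) * lam) * u ^ n :=
        mul_lt_mul_of_pos_right r1 hun
      have r3 : (n:ℝ) * s ^ 2 < ((n:ℝ) + 2) * lam := by
        have := mul_lt_mul_of_pos_left hs2R hn0; linarith [hR2le]
      have r4 : ((n:ℝ) * s ^ 2) * s ^ n < (((n:ℝ) + 2) * lam) * s ^ n :=
        mul_lt_mul_of_pos_right r3 hsn
      linarith [E, r2, r4]

theorem stmt1 (n : ℕ) (hn : 2 ≤ n) (lam A B t : ℝ) (hlam : 0 < lam)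
    (hA : 0 < A) (hB : 0 < B) (hAB : A / B < Real.sqrt ((n + 2) * lam / n))
    (g : ℝ → ℝ) (hg_meas : Measurable g)
    (hg_nonneg : ∀ r ∈ Ioi (0 : ℝ), 0 ≤ g r)
    (hg_int : ∫ r in Ioi (0 : ℝ), g r ≤ A)
    (hg_bd : ∀ r, g r ≤ B)
    (ht1 : t < Real.sqrt lam) (ht2 : Real.sqrt lam < t + A / B)
    (ht3 : lam * ((t + A / B) ^ n - t ^ n) / n
        = ((t + A / B) ^ (n + 2) - t ^ (n + 2)) / (n + 2)) :
    ∫ r in Ioi (0 : ℝ), (lam * r ^ n / n - r ^ (n + 2) / (n + 2)) * g r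
      ≤ B * (lam * ((t + A / B) ^ (n + 1) - t ^ (n + 1)) / (n * (n + 1))
          - ((t + A / B) ^ (n + 3) - t ^ (n + 3)) / ((n + 2) * (n + 3))) := by
  set φ : ℝ → ℝ := fun x => lam * x ^ n / n - x ^ (n + 2) / (n + 2) with hφ_def
  set d : ℝ := A / B with hd_def
  set s : ℝ := t + d with hs_def
  have hn1 : 1 ≤ n := by omega
  have hn0 : (0 : ℝ) < n := by positivity
  have hn0' : ((n : ℝ)) ≠ 0 := ne_of_gt hn0
  have hn2' : ((n : ℝ)) + 2 ≠ 0 := by positivity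
  have hd : 0 < d := div_pos hA hB
  have ht0 : 0 < t := t_pos n hn lam t d hlam hd hAB ht1 ht2 ht3
  have hsl : Real.sqrt lam < s := ht2
  have hs0 : 0 < s := lt_trans (Real.sqrt_pos.mpr hlam) hsl
  have hts : t < s := by rw [hs_def]; linarith
  have htle : t ≤ s := hts.le
  have hsqnn : (0:ℝ) ≤ Real.sqrt lam := Real.sqrt_nonneg lam
  set c : ℝ := lam * t ^ n / n - t ^ (n + 2) / (n + 2) with hc_def
  have hct : φ t = c := rfl
  have hcs : φ s = c := by
    rw [hφ_def, hc_def]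
    simp only
    field_simp at ht3 ⊢
    linarith [ht3]
  have hc_pos : 0 < c := by
    have ht2' : t ^ 2 < lam := by
      have := (Real.lt_sqrt ht0.le).mp ht1; linarith
    have htn : 0 < t ^ n := pow_pos ht0 n
    have e : t ^ (n + 2) = t ^ n * t ^ 2 := by ring
    rw [hc_def, e, sub_pos, div_lt_div_iff₀ (by positivity) (by positivity)]
    have h1 : t ^ n * t ^ 2 < t ^ n * lam := by
      exact mul_lt_mul_of_pos_left ht2' htn
    have h2 : (t ^ n * lam) * (n:ℝ) ≤ (lam * t ^ n) * ((n:ℝ) + 2) := by nlinarith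
    nlinarith [mul_lt_mul_of_pos_right h1 hn0]
  -- key pointwise facts
  have hM := phi_mono n hn1 lam hlam
  have hAn := phi_anti n hn1 lam hlam
  have key1 : ∀ r ∈ Icc t s, c ≤ φ r := by
    intro r hr
    rcases le_total r (Real.sqrt lam) with h | h
    · rw [← hct]
      exact hM ⟨ht0.le, ht1.le⟩ ⟨le_trans ht0.le hr.1, h⟩ hr.1
    · rw [← hcs]
      exact hAn h hsl.le hr.2
  have key2 : ∀ r ∈ Ioi (0:ℝ), r ∉ Icc t s → φ r ≤ c := by
    intro r hr0 hr
    rw [mem_Icc, not_and_or, not_le, not_le] at hr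
    rcases hr with hrt | hsr
    · rw [← hct]
      exact hM ⟨(mem_Ioi.mp hr0).le, (lt_trans hrt ht1).le⟩ ⟨ht0.le, ht1.le⟩ hrt.le
    · rw [← hcs]
      exact hAn hsl.le (hsl.le.trans hsr.le) hsr.le
  have pointwise : ∀ r ∈ Ioi (0:ℝ),
      φ r * g r ≤ (Icc t s).indicator (fun x => (φ x - c) * B) r + c * g r := by
    intro r hr
    by_cases hmem : r ∈ Icc t s
    · rw [indicator_of_mem hmem]
      have h1 : 0 ≤ φ r - c := sub_nonneg.mpr (key1 r hmem)
      have h2 : g r ≤ B := hg_bd r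
      nlinarith [mul_nonneg h1 (sub_nonneg.mpr h2)]
    · rw [indicator_of_notMem hmem]
      have h1 : φ r ≤ c := key2 r hr hmem
      have h2 : 0 ≤ g r := hg_nonneg r hr
      nlinarith [mul_nonneg (sub_nonneg.mpr h1) h2]
  -- value of the interval integral
  have hIphi : IntervalIntegrable φ volume t s := (phi_cont n lam).intervalIntegrable t s
  have hIcc_sub : Icc t s ⊆ Ioi (0:ℝ) := fun x hx => lt_of_lt_of_le ht0 hx.1
  have hBd : B * d = A := by rw [hd_def]; field_simp
  have ind_eq : ∫ r in Ioi (0:ℝ), (Icc t s).indicator (fun x => (φ x - c) * B) r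
      = (∫ r in t..s, φ r) * B - c * (s - t) * B := by
    rw [integral_indicator measurableSet_Icc, Measure.restrict_restrict measurableSet_Icc,
      inter_eq_left.mpr hIcc_sub, integral_Icc_eq_integral_Ioc,
      ← intervalIntegral.integral_of_le htle]
    rw [intervalIntegral.integral_mul_const,
      intervalIntegral.integral_sub hIphi intervalIntegrable_const,
      intervalIntegral.integral_const]
    simp [smul_eq_mul]
    ring
  have rhs_eq : B * (lam * (s ^ (n + 1) - t ^ (n + 1)) / (n * (n + 1))
      - (s ^ (n + 3) - t ^ (n + 3)) / ((n + 2) * (n + 3))) = B * ∫ r in t..s, φ r := by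
    rw [hφ_def, phi_ftc n hn1 lam t s]
  rw [show t + A / B = s from rfl] at *
  rw [rhs_eq]
  by_cases hint : IntegrableOn (fun r => φ r * g r) (Ioi (0:ℝ)) volume
  · -- main case
    have hgi : IntegrableOn g (Ioi (0:ℝ)) volume := by
      set R : ℝ := Real.sqrt ((n + 2) * lam / n) with hR_def
      have hR0 : 0 < R := Real.sqrt_pos.mpr (by positivity)
      have hR2 : (n:ℝ) * R ^ 2 = ((n:ℝ) + 2) * lam := by
        have hq : R ^ 2 = ((n:ℝ) + 2) * lam / n := Real.sq_sqrt (by positivity)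
        rw [hq]; field_simp
      set Mx : ℝ := max 1 (R + 1) with hMx_def
      have hM1 : (1:ℝ) ≤ Mx := le_max_left _ _
      have hMR : R + 1 ≤ Mx := le_max_right _ _
      have hM0 : (0:ℝ) < Mx := lt_of_lt_of_le one_pos hM1
      have hφ_neg : ∀ r : ℝ, Mx ≤ r → φ r ≤ -(1 / ((n:ℝ) + 2)) := by
        intro r hrM
        have hr1 : (1:ℝ) ≤ r := le_trans hM1 hrM
        have hr0 : (0:ℝ) < r := lt_of_lt_of_le one_pos hr1
        have hrn : (1:ℝ) ≤ r ^ n := one_le_pow₀ hr1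
        have hr2 : R ^ 2 + 1 ≤ r ^ 2 := by nlinarith [le_trans hMR hrM, hR0]
        have hp : (1:ℝ) * 1 ≤ r ^ n * (r ^ 2 - R ^ 2) :=
          mul_le_mul hrn (by linarith) one_pos.le (by positivity)
        have hsub : lam * r ^ n * ((n:ℝ) + 2) = (n:ℝ) * R ^ 2 * r ^ n := by
          linear_combination r ^ n * hR2.symm
        have key : lam * r ^ n * ((n:ℝ) + 2) + (n:ℝ) ≤ r ^ n * r ^ 2 * n := by
          have := mul_le_mul_of_nonneg_left hp hn0.le
          nlinarith [hsub]
        rw [hφ_def]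
        simp only
        have e : r ^ (n + 2) = r ^ n * r ^ 2 := by ring
        rw [e, sub_le_iff_le_add]
        rw [div_le_iff₀ (by positivity : (0:ℝ) < (n:ℝ))] at *
        have h2 : (0:ℝ) < ((n:ℝ) + 2) := by positivity
        rw [← sub_nonneg]
        have expand : (-(1 / ((n:ℝ) + 2)) + r ^ n * r ^ 2 / ((n:ℝ) + 2)) * ↑n
            - lam * r ^ n
            = (r ^ n * r ^ 2 * ↑n - (n:ℝ) - lam * r ^ n * ((n:ℝ) + 2)) / ((n:ℝ) + 2) := by
          field_simp
          ring
        rw [expand]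
        apply div_nonneg _ h2.le
        linarith [key]
      have h1 : IntegrableOn g (Ioc 0 Mx) volume := by
        apply Measure.integrableOn_of_bounded (M := B) measure_Ioc_lt_top.ne
          hg_meas.aestronglyMeasurable
        filter_upwards [ae_restrict_mem measurableSet_Ioc] with x hx
        rw [Real.norm_eq_abs, abs_of_nonneg (hg_nonneg x hx.1)]
        exact hg_bd x
      have h2 : IntegrableOn g (Ioi Mx) volume := by
        have hsub' : Ioi Mx ⊆ Ioi (0:ℝ) := Ioi_subset_Ioi hM0.le
        have hφg' : IntegrableOn (fun r => φ r * g r) (Ioi Mx) volume := hint.mono_set hsub'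
        apply Integrable.mono' ((hφg'.abs).const_mul ((n:ℝ) + 2))
          hg_meas.aestronglyMeasurable.restrict
        filter_upwards [ae_restrict_mem measurableSet_Ioi] with x hx
        have hx0 : 0 < x := lt_trans hM0 hx
        have hgx : 0 ≤ g x := hg_nonneg x hx0
        have hφx : φ x ≤ -(1 / ((n:ℝ) + 2)) := hφ_neg x hx.le
        rw [Real.norm_eq_abs, abs_of_nonneg hgx, abs_mul,
          abs_of_nonpos (le_trans hφx (neg_nonpos.mpr (by positivity)))]
        have h3 : 1 / ((n:ℝ) + 2) ≤ -φ x := by linarith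
        have h4 : (1 / ((n:ℝ) + 2)) * g x ≤ (-φ x) * |g x| := by
          rw [abs_of_nonneg hgx]
          exact mul_le_mul_of_nonneg_right h3 hgx
        have h5 := mul_le_mul_of_nonneg_left h4 (by positivity : (0:ℝ) ≤ (n:ℝ) + 2)
        have h6 : ((n:ℝ) + 2) * (1 / ((n:ℝ) + 2)) = 1 := by field_simp
        calc g x = ((n:ℝ) + 2) * ((1 / ((n:ℝ) + 2)) * g x) := by
              rw [← mul_assoc, h6, one_mul]
          _ ≤ ((n:ℝ) + 2) * (-φ x * |g x|) := h5
      have hU : IntegrableOn g (Ioc 0 Mx ∪ Ioi Mx) volume := h1.union h2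
      rwa [Ioc_union_Ioi_eq_Ioi hM0.le] at hU
    have h_on : IntegrableOn (fun x => (φ x - c) * B) (Icc t s) volume :=
      (Continuous.integrableOn_Icc (by fun_prop))
    have h_ind : Integrable ((Icc t s).indicator (fun x => (φ x - c) * B))
        (volume.restrict (Ioi (0:ℝ))) :=
      (h_on.integrable_indicator measurableSet_Icc).restrict
    have h_cg : Integrable (fun r => c * g r) (volume.restrict (Ioi (0:ℝ))) :=
      hgi.const_mul c
    have step1 : ∫ r in Ioi (0:ℝ), φ r * g r
        ≤ ∫ r in Ioi (0:ℝ), ((Icc t s).indicator (fun x => (φ x - c) * B) r + c * g r) :=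
      setIntegral_mono_on hint (h_ind.add h_cg) measurableSet_Ioi pointwise
    have step2 : ∫ r in Ioi (0:ℝ), ((Icc t s).indicator (fun x => (φ x - c) * B) r + c * g r)
        = (∫ r in Ioi (0:ℝ), (Icc t s).indicator (fun x => (φ x - c) * B) r)
          + c * ∫ r in Ioi (0:ℝ), g r := by
      rw [integral_add h_ind h_cg, integral_const_mul]
    have step3 : c * (∫ r in Ioi (0:ℝ), g r) ≤ c * A :=
      mul_le_mul_of_nonneg_left hg_int hc_pos.le
    calc ∫ r in Ioi (0:ℝ), φ r * g r
        ≤ (∫ r in Ioi (0:ℝ), (Icc t s).indicator (fun x => (φ x - c) * B) r)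
          + c * ∫ r in Ioi (0:ℝ), g r := by rw [← step2]; exact step1
      _ ≤ ((∫ r in t..s, φ r) * B - c * (s - t) * B) + c * A := by
          rw [ind_eq]; linarith
      _ = B * ∫ r in t..s, φ r := by
          have : s - t = d := by rw [hs_def]; ring
          rw [this, ← hBd]; ring
  · -- non-integrable case : LHS = 0
    have : ∫ r in Ioi (0:ℝ), φ r * g r = 0 := integral_undef hint
    rw [this]
    have hnn : 0 ≤ ∫ r in t..s, φ r := by
      apply intervalIntegral.integral_nonneg htle
      intro u hu
      exact le_trans hc_pos.le (key1 u hu)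
    positivity
end

section
/- Let n ≥ 2, λ > 0, A, B > 0 with A/B < √((n+2)λ/n). Then there exists a unique t₀ with 0 < t₀ + A/B, t₀ < √λ < t₀ + A/B, satisfying λ[(t₀+A/B)ⁿ − t₀ⁿ]/n = [(t₀+A/B)^(n+2) − t₀^(n+2)]/(n+2). -/
open Real

lemma auxA : ∀ n : ℕ, 2 ≤ n → ∀ a s : ℝ, 0 ≤ a → a < s →
    0 < 2*s^(n+2) + (n:ℝ)*a^(n+2) - ((n:ℝ)+2)*s^2*a^n := by
  intro n hn
  induction n, hn using Nat.le_induction with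
  | base =>
    intro a s ha has
    have key : 2*s^(2+2) + ((2:ℕ):ℝ)*a^(2+2) - (((2:ℕ):ℝ)+2)*s^2*a^2 = 2*(s^2-a^2)^2 := by
      push_cast; ring
    rw [key]
    have ha2 : a^2 < s^2 := by nlinarith
    nlinarith [mul_pos (sub_pos.mpr ha2) (sub_pos.mpr ha2)]
  | succ n hn ih =>
    intro a s ha has
    have hs : 0 < s := lt_of_le_of_lt ha has
    have h0 := ih a s ha has
    have key : 2*s^(n+1+2) + ((n+1:ℕ):ℝ)*a^(n+1+2) - (((n+1:ℕ):ℝ)+2)*s^2*a^(n+1)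
        = s*(2*s^(n+2) + (n:ℝ)*a^(n+2) - ((n:ℝ)+2)*s^2*a^n)
          + a^n*(a-s)^2*(((n:ℝ)+1)*a + ((n:ℝ)+2)*s) := by
      push_cast; ring
    have h1 : (0:ℝ) ≤ a^n*(a-s)^2*(((n:ℝ)+1)*a + ((n:ℝ)+2)*s) := by
      have : (0:ℝ) < ((n:ℝ)+1)*a + ((n:ℝ)+2)*s := by positivity
      positivity
    nlinarith [mul_pos hs h0]

lemma auxB : ∀ n : ℕ, 2 ≤ n → ∀ a s : ℝ, |a| < s →
    0 < 2*s^(n+2) + (n:ℝ)*a^(n+2) - ((n:ℝ)+2)*s^2*a^n := by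
  intro n hn a s habs
  have hs : 0 < s := lt_of_le_of_lt (abs_nonneg a) habs
  rcases le_or_gt 0 a with ha | ha
  · exact auxA n hn a s ha (lt_of_le_of_lt (le_abs_self a) habs)
  · rcases Nat.even_or_odd n with he | ho
    · have h1 : a^n = (-a)^n := (he.neg_pow a).symm
      have h2 : a^(n+2) = (-a)^(n+2) := ((he.add even_two).neg_pow a).symm
      rw [h1, h2]
      exact auxA n hn (-a) s (by linarith) (lt_of_le_of_lt (neg_le_abs a) habs)
    · have han : a^n < 0 := ho.pow_neg ha
      have ha2 : a^2 < s^2 := by nlinarith [abs_nonneg a, le_abs_self a, neg_le_abs a]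
      have hid : a^(n+2) = a^n * a^2 := by ring
      have hsp : 0 < s^(n+2) := pow_pos hs _
      have hnn : (0:ℝ) ≤ (n:ℝ) := Nat.cast_nonneg n
      nlinarith [mul_nonneg hnn (mul_nonneg (neg_nonneg.mpr han.le) (sub_nonneg.mpr ha2.le)),
        mul_pos (neg_pos.mpr han) (pow_pos hs 2)]

lemma auxMVT : ∀ (m : ℕ) (s b : ℝ), 0 ≤ s → s ≤ b →
    b^(m+1) - s^(m+1) ≤ ((m:ℝ)+1)*b^m*(b-s) := by
  intro m
  induction m with
  | zero => intro s b hs hb; norm_num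
  | succ m ih =>
    intro s b hs hb
    have hb0 : 0 ≤ b := le_trans hs hb
    have h1 := ih s b hs hb
    have h2 : s^(m+1) ≤ b^(m+1) := pow_le_pow_left₀ hs hb _
    have key : b^(m+1+1) - s^(m+1+1) = b*(b^(m+1) - s^(m+1)) + s^(m+1)*(b-s) := by ring
    have h3 : b*(b^(m+1) - s^(m+1)) ≤ b*(((m:ℝ)+1)*b^m*(b-s)) :=
      mul_le_mul_of_nonneg_left h1 hb0
    have h4 : s^(m+1)*(b-s) ≤ b^(m+1)*(b-s) :=
      mul_le_mul_of_nonneg_right h2 (by linarith)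
    have : b*(((m:ℝ)+1)*b^m*(b-s)) = ((m:ℝ)+1)*b^(m+1)*(b-s) := by ring
    push_cast
    nlinarith

lemma auxC (m : ℕ) (s b : ℝ) (hs : 0 < s) (hb : s < b) :
    0 < 2*s^(m+4) + ((m:ℝ)+2)*b^(m+4) - ((m:ℝ)+4)*s^2*b^(m+2) := by
  have hmvt := auxMVT (m+1) s b hs.le hb.le
  have hrw : m+1+1 = m+2 := by omega
  rw [hrw] at hmvt
  push_cast at hmvt
  have hb0 : 0 < b := lt_trans hs hb
  have hbm : 0 < b^(m+1) := pow_pos hb0 _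
  have key : 2*s^(m+4) + ((m:ℝ)+2)*b^(m+4) - ((m:ℝ)+4)*s^2*b^(m+2)
      = ((m:ℝ)+2)*b^(m+2)*(b^2-s^2) - 2*s^2*(b^(m+2)-s^(m+2)) := by ring
  rw [key]
  have h1 : 2*s^2*(b^(m+2)-s^(m+2)) ≤ 2*s^2*(((m:ℝ)+1+1)*b^(m+1)*(b-s)) := by
    apply mul_le_mul_of_nonneg_left hmvt (by positivity)
  have h2 : ((m:ℝ)+2)*b^(m+2)*(b^2-s^2) - 2*s^2*(((m:ℝ)+2)*b^(m+1)*(b-s))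
      = ((m:ℝ)+2)*b^(m+1)*(b-s)*((b-s)*(b+2*s)) := by ring
  nlinarith [mul_pos (mul_pos (mul_pos (by positivity : (0:ℝ) < (m:ℝ)+2) hbm)
    (by linarith : (0:ℝ) < b-s)) (mul_pos (by linarith : (0:ℝ) < b-s) (by linarith : (0:ℝ) < b+2*s))]

noncomputable def Gfun (m : ℕ) (lam c : ℝ) (t : ℝ) : ℝ :=
  ((m:ℝ)+4)*lam*((t+c)^(m+2) - t^(m+2)) - ((m:ℝ)+2)*((t+c)^(m+4) - t^(m+4))

noncomputable def G1fun (m : ℕ) (lam c : ℝ) (t : ℝ) : ℝ :=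
  ((m:ℝ)+2)*((m:ℝ)+4)*(lam*((t+c)^(m+1) - t^(m+1)) - ((t+c)^(m+3) - t^(m+3)))

noncomputable def G2fun (m : ℕ) (lam c : ℝ) (t : ℝ) : ℝ :=
  ((m:ℝ)+2)*((m:ℝ)+4)*(((m:ℝ)+1)*lam*((t+c)^m - t^m) - ((m:ℝ)+3)*((t+c)^(m+2) - t^(m+2)))

lemma Gcont (m : ℕ) (lam c : ℝ) : Continuous (Gfun m lam c) := by
  unfold Gfun; fun_prop

lemma G1cont (m : ℕ) (lam c : ℝ) : Continuous (G1fun m lam c) := by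
  unfold G1fun; fun_prop

lemma hasDerivAt_G (m : ℕ) (lam c t : ℝ) :
    HasDerivAt (Gfun m lam c) (G1fun m lam c t) t := by
  have hid : HasDerivAt (fun x : ℝ => x + c) 1 t := (hasDerivAt_id t).add_const c
  have h1 := hid.pow (m+2)
  have h2 := hasDerivAt_pow (m+2) t
  have h3 := hid.pow (m+4)
  have h4 := hasDerivAt_pow (m+4) t
  have e1 : m+2-1 = m+1 := by omega
  have e2 : m+4-1 = m+3 := by omega
  rw [e1] at h1 h2
  rw [e2] at h3 h4
  have := ((h1.sub h2).const_mul (((m:ℝ)+4)*lam)).sub ((h3.sub h4).const_mul ((m:ℝ)+2))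
  refine this.congr_deriv ?_
  unfold G1fun; push_cast; ring

lemma hasDerivAt_G1 (m : ℕ) (lam c t : ℝ) :
    HasDerivAt (G1fun m lam c) (G2fun m lam c t) t := by
  have hid : HasDerivAt (fun x : ℝ => x + c) 1 t := (hasDerivAt_id t).add_const c
  have h1 := hid.pow (m+1)
  have h2 := hasDerivAt_pow (m+1) t
  have h3 := hid.pow (m+3)
  have h4 := hasDerivAt_pow (m+3) t
  have e1 : m+1-1 = m := by omega
  have e2 : m+3-1 = m+2 := by omega
  rw [e1] at h1 h2
  rw [e2] at h3 h4
  have := (((h1.sub h2).const_mul lam).sub (h3.sub h4)).const_mul (((m:ℝ)+2)*((m:ℝ)+4))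
  refine this.congr_deriv ?_
  unfold G2fun; push_cast; ring

lemma Gmono (m : ℕ) (hm : Odd m) (lam c s : ℝ) (hs : 0 < s)
    (hs2 : s^2 = lam) (hc : 0 < c) (hc2s : c < 2*s) :
    StrictAntiOn (Gfun m lam c) (Set.Icc (s-c) s) := by
  apply strictAntiOn_of_deriv_neg (convex_Icc _ _) (Gcont m lam c).continuousOn
  intro t ht
  rw [interior_Icc] at ht
  obtain ⟨ht1, ht2⟩ := ht
  rw [(hasDerivAt_G m lam c t).deriv]
  have htc : s < t + c := by linarith
  have htcpos : 0 < t + c := by linarith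
  have hts : -s < t := by linarith
  have htlam : t^2 < lam := by nlinarith [mul_pos (show 0 < s - t by linarith) (show 0 < s + t by linarith)]
  have h1lam : lam < (t+c)^2 := by nlinarith [mul_pos (show 0 < t + c - s by linarith) (show 0 < t + c + s by linarith)]
  have hm1 : Even (m+1) := hm.add_one
  have hpos1 : 0 < (t+c)^(m+1)*((t+c)^2-lam) := mul_pos (pow_pos htcpos _) (by linarith)
  have hpos2 : 0 ≤ t^(m+1)*(lam - t^2) := mul_nonneg (hm1.pow_nonneg t) (by linarith)
  have hid : G1fun m lam c t
      = -(((m:ℝ)+2)*((m:ℝ)+4)*((t+c)^(m+1)*((t+c)^2 - lam) + t^(m+1)*(lam - t^2))) := by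
    unfold G1fun; ring
  rw [hid]
  have : 0 < ((m:ℝ)+2)*((m:ℝ)+4)*((t+c)^(m+1)*((t+c)^2 - lam) + t^(m+1)*(lam - t^2)) :=
    mul_pos (by positivity) (by linarith)
  linarith

lemma Gconc (m : ℕ) (hm : Even m) (lam c s : ℝ) (hs : 0 < s)
    (hs2 : s^2 = lam) (hc : 0 < c) (hc2s : c < 2*s) :
    StrictConcaveOn ℝ (Set.Icc (s-c) s) (Gfun m lam c) := by
  apply strictConcaveOn_of_deriv2_neg (convex_Icc _ _) (Gcont m lam c).continuousOn
  intro t ht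
  rw [interior_Icc] at ht
  obtain ⟨ht1, ht2⟩ := ht
  have hd : deriv^[2] (Gfun m lam c) t = G2fun m lam c t := by
    rw [Function.iterate_succ, Function.iterate_one, Function.comp_apply,
      funext (fun x => (hasDerivAt_G m lam c x).deriv)]
    exact (hasDerivAt_G1 m lam c t).deriv
  rw [hd]
  have htc : s < t + c := by linarith
  have htcpos : 0 < t + c := by linarith
  have hts : -s < t := by linarith
  have htlam : t^2 < lam := by nlinarith [mul_pos (show 0 < s - t by linarith) (show 0 < s + t by linarith)]
  have h1lam : lam < (t+c)^2 := by nlinarith [mul_pos (show 0 < t + c - s by linarith) (show 0 < t + c + s by linarith)]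
  have habs : |t| < t + c := abs_lt.mpr ⟨by linarith, by linarith⟩
  have hme2 : Even (m+2) := hm.add even_two
  have hpow : t^(m+2) < (t+c)^(m+2) := by
    rw [← hme2.pow_abs t]
    exact pow_lt_pow_left₀ habs (abs_nonneg t) (by omega)
  have hpos1 : 0 < (t+c)^m*((t+c)^2-lam) := mul_pos (pow_pos htcpos _) (by linarith)
  have hpos2 : 0 ≤ t^m*(lam-t^2) := mul_nonneg (hm.pow_nonneg t) (by linarith)
  have hid : G2fun m lam c t
      = -(((m:ℝ)+2)*((m:ℝ)+4)*(((m:ℝ)+1)*((t+c)^m*((t+c)^2-lam) + t^m*(lam-t^2))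
          + 2*((t+c)^(m+2) - t^(m+2)))) := by
    unfold G2fun; ring
  rw [hid]
  have hbr : 0 < ((m:ℝ)+1)*((t+c)^m*((t+c)^2-lam) + t^m*(lam-t^2))
      + 2*((t+c)^(m+2)-t^(m+2)) := by
    have h5 : (0:ℝ) < (m:ℝ)+1 := by positivity
    nlinarith
  have := mul_pos (show (0:ℝ) < ((m:ℝ)+2)*((m:ℝ)+4) by positivity) hbr
  linarith

theorem stmt2 (n : ℕ) (hn : 2 ≤ n) (lam A B : ℝ) (hlam : 0 < lam)
    (hA : 0 < A) (hB : 0 < B) (hAB : A / B < Real.sqrt ((n + 2) * lam / n)) :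
    ∃! t₀ : ℝ, 0 < t₀ + A / B ∧ t₀ < Real.sqrt lam ∧ Real.sqrt lam < t₀ + A / B ∧
      lam * ((t₀ + A / B) ^ n - t₀ ^ n) / n
        = ((t₀ + A / B) ^ (n + 2) - t₀ ^ (n + 2)) / (n + 2) := by
  obtain ⟨m, rfl⟩ : ∃ m, n = m + 2 := ⟨n - 2, by omega⟩
  set c := A / B with hc_def
  set s := Real.sqrt lam with hs_def
  have hc : 0 < c := div_pos hA hB
  have hs : 0 < s := Real.sqrt_pos.mpr hlam
  have hs2 : s^2 = lam := Real.sq_sqrt hlam.le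
  have hc2 : c^2 < 2*lam := by
    have h := (Real.lt_sqrt hc.le).mp hAB
    push_cast at h
    have hm2 : (0:ℝ) < (m:ℝ)+2 := by positivity
    rw [lt_div_iff₀ hm2] at h
    nlinarith
  have hc2s : c < 2*s := by
    have h : c^2 < (2*s)^2 := by nlinarith
    exact lt_of_pow_lt_pow_left₀ 2 (by positivity) h
  have hmem_abs : |s - c| < s := abs_lt.mpr ⟨by linarith, by linarith⟩
  have hGleft : 0 < Gfun m lam c (s-c) := by
    have h := auxB (m+2) (by omega) (s-c) s hmem_abs
    push_cast at h
    simp only [show m+2+2 = m+4 from by omega] at h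
    have hsc : s - c + c = s := by ring
    have hre : Gfun m lam c (s-c)
        = 2*s^(m+4) + ((m:ℝ)+2)*(s-c)^(m+4) - ((m:ℝ)+2+2)*s^2*(s-c)^(m+2) := by
      unfold Gfun
      rw [hsc, ← hs2]
      ring
    rw [hre]
    linarith
  have hGright : Gfun m lam c s < 0 := by
    have h := auxC m s (s+c) hs (by linarith)
    have hre : Gfun m lam c s
        = -(2*s^(m+4) + ((m:ℝ)+2)*(s+c)^(m+4) - ((m:ℝ)+4)*s^2*(s+c)^(m+2)) := by
      unfold Gfun
      rw [← hs2]
      ring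
    rw [hre]
    linarith
  have hmemIvt : (0:ℝ) ∈ Set.Ioo (Gfun m lam c s) (Gfun m lam c (s-c)) := ⟨hGright, hGleft⟩
  obtain ⟨t₀, ht₀mem, ht₀⟩ := intermediate_value_Ioo' (by linarith : s - c ≤ s)
    (Gcont m lam c).continuousOn hmemIvt
  have huniq : ∀ u v : ℝ, u ∈ Set.Ioo (s-c) s → v ∈ Set.Ioo (s-c) s →
      Gfun m lam c u = 0 → Gfun m lam c v = 0 → u = v := by
    have key : ∀ u v : ℝ, u ∈ Set.Ioo (s-c) s → v ∈ Set.Ioo (s-c) s →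
        Gfun m lam c u = 0 → Gfun m lam c v = 0 → u < v → False := by
      intro u v hu hv hGu hGv huv
      rcases Nat.even_or_odd m with hm | hm
      · have K := Gconc m hm lam c s hs hs2 hc hc2s
        have hden : 0 < v - (s-c) := by have := hu.1; linarith
        set θ : ℝ := (v - u)/(v - (s-c)) with hθ_def
        have hθpos : 0 < θ := div_pos (by linarith) hden
        have hθlt : θ < 1 := (div_lt_one hden).mpr (by have := hu.1; linarith)
        have h1θ : 0 < 1 - θ := by linarith
        have hne : s - c ≠ v := ne_of_lt (by have := hv.1; linarith)
        have hcomb := K.2 (show s-c ∈ Set.Icc (s-c) s from ⟨le_refl _, by linarith⟩)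
          (show v ∈ Set.Icc (s-c) s from ⟨hv.1.le, hv.2.le⟩)
          hne hθpos h1θ (by ring)
        have hxy : θ • (s-c) + (1-θ) • v = u := by
          simp only [smul_eq_mul, hθ_def]
          have hne' : v - (s-c) ≠ 0 := ne_of_gt hden
          field_simp
          ring
        rw [hxy, hGu, hGv] at hcomb
        simp only [smul_eq_mul, mul_zero, add_zero] at hcomb
        nlinarith
      · have K := Gmono m hm lam c s hs hs2 hc hc2s
        have h := K (Set.mem_Icc.mpr ⟨hu.1.le, hu.2.le⟩)
          (Set.mem_Icc.mpr ⟨hv.1.le, hv.2.le⟩) huv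
        rw [hGu, hGv] at h
        exact lt_irrefl 0 h
    intro u v hu hv hGu hGv
    rcases lt_trichotomy u v with h | h | h
    · exact (key u v hu hv hGu hGv h).elim
    · exact h
    · exact (key v u hv hu hGv hGu h).elim
  have h1 : ((m+2:ℕ):ℝ) ≠ 0 := by positivity
  have h2 : ((m+2:ℕ):ℝ) + 2 ≠ 0 := by positivity
  refine ⟨t₀, ⟨?_, ?_, ?_, ?_⟩, ?_⟩
  · have := ht₀mem.1; linarith
  · exact ht₀mem.2
  · have := ht₀mem.1; linarith
  · rw [div_eq_div_iff h1 h2]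
    have hG0 : Gfun m lam c t₀ = 0 := ht₀
    unfold Gfun at hG0
    push_cast
    linear_combination hG0
  · intro y hy
    obtain ⟨hy1, hy2, hy3, hy4⟩ := hy
    have hymem : y ∈ Set.Ioo (s-c) s := ⟨by linarith, hy2⟩
    have hGy : Gfun m lam c y = 0 := by
      rw [div_eq_div_iff h1 h2] at hy4
      unfold Gfun
      push_cast at hy4 ⊢
      linear_combination hy4
    exact huniq y t₀ hymem ht₀mem hGy ht₀
end

section
/- For a bounded open set Ω in ℝⁿ with n ≥ 1, the moment of inertia I(Ω) = inf_{a} ∫_Ω |x−a|² dx satisfies I(Ω) ≥ (n/(n+2))·R_Ω²·|Ω|, where R_Ω > 0 is defined by |B(0,R_Ω)| = |Ω|. -/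
open Real Set MeasureTheory Metric

lemma ballMoment (n : ℕ) (hn : 1 ≤ n) (R : ℝ) (hR : 0 < R) :
    ∫ x in Metric.ball (0 : EuclideanSpace ℝ (Fin n)) R, ‖x‖ ^ 2
      = (n / (n + 2) : ℝ) * R ^ 2 * (volume (Metric.ball (0 : EuclideanSpace ℝ (Fin n)) R)).toReal := by
  haveI : NeZero n := ⟨by omega⟩
  haveI : Nontrivial (EuclideanSpace ℝ (Fin n)) := inferInstance
  have hdim : Module.finrank ℝ (EuclideanSpace ℝ (Fin n)) = n := finrank_euclideanSpace_fin
  set g : ℝ → ℝ := Set.indicator (Iio R) (fun r => r ^ 2) with hg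
  have h1 : ∫ x in Metric.ball (0 : EuclideanSpace ℝ (Fin n)) R, ‖x‖ ^ 2
      = ∫ x : EuclideanSpace ℝ (Fin n), g ‖x‖ := by
    rw [← integral_indicator measurableSet_ball]
    congr 1
    ext x
    simp [g, Set.indicator, mem_ball_zero_iff]
  rw [h1, integral_fun_norm_addHaar volume g, hdim]
  have h2 : ∫ y in Ioi (0:ℝ), y ^ (n - 1) • g y = ∫ y in Ioo (0:ℝ) R, y ^ (n+1) := by
    have e1 : ∀ y ∈ Ioi (0:ℝ), y ^ (n - 1) • g y
        = Set.indicator (Iio R) (fun y => y ^ (n+1)) y := by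
      intro y hy
      by_cases h : y ∈ Iio R
      · simp only [g, Set.indicator_of_mem h, smul_eq_mul]
        rw [← pow_add]
        congr 1
        omega
      · simp [g, Set.indicator_of_notMem h]
    rw [setIntegral_congr_fun measurableSet_Ioi e1,
      integral_indicator measurableSet_Iio, Measure.restrict_restrict measurableSet_Iio,
      Set.inter_comm, Set.Ioi_inter_Iio]
  rw [h2]
  have h3 : ∫ y in Ioo (0:ℝ) R, y ^ (n+1) = R ^ (n+2) / (n+2) := by
    rw [← MeasureTheory.integral_Ioc_eq_integral_Ioo, ← intervalIntegral.integral_of_le hR.le,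
      integral_pow]
    push_cast
    ring
  rw [h3]
  have hball : (volume (Metric.ball (0 : EuclideanSpace ℝ (Fin n)) R)).toReal
      = R ^ n * (volume (Metric.ball (0 : EuclideanSpace ℝ (Fin n)) 1)).toReal := by
    rw [Measure.addHaar_ball volume 0 hR.le, hdim, ENNReal.toReal_mul, ENNReal.toReal_ofReal
      (pow_nonneg hR.le n)]
  rw [hball]
  rw [nsmul_eq_mul, smul_eq_mul]
  have hn2 : (0:ℝ) < (n:ℝ) + 2 := by positivity
  field_simp
  rw [measureReal_def]
  ring

theorem stmt4 (n : ℕ) (hn : 1 ≤ n) (Ω : Set (EuclideanSpace ℝ (Fin n)))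
    (hΩ_open : IsOpen Ω) (hΩ_bd : Bornology.IsBounded Ω) (hΩ_pos : 0 < volume Ω)
    (R : ℝ) (hR : 0 < R)
    (hvol : volume (Metric.ball (0 : EuclideanSpace ℝ (Fin n)) R) = volume Ω) :
    (n / (n + 2) : ℝ) * R ^ 2 * (volume Ω).toReal
      ≤ ⨅ a : EuclideanSpace ℝ (Fin n), ∫ x in Ω, ‖x - a‖ ^ 2 := by
  have hΩ_meas : MeasurableSet Ω := hΩ_open.measurableSet
  have hvolΩ_lt : volume Ω < ⊤ := hvol ▸ measure_ball_lt_top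
  refine le_ciInf fun a => ?_
  set f : EuclideanSpace ℝ (Fin n) → ℝ := fun x => ‖x - a‖ ^ 2 with hf
  have hfc : Continuous f := ((continuous_id.sub continuous_const).norm.pow 2)
  set B := Metric.ball a R with hB
  have hmeasB : MeasurableSet B := measurableSet_ball
  have hvolB : volume B = volume Ω := by
    rw [hB, Measure.addHaar_ball_center, hvol]
  -- integrability
  obtain ⟨M, hM⟩ := (hΩ_bd.union isBounded_ball).subset_closedBall a
  have hIcb : IntegrableOn f (Metric.closedBall a M) :=
    hfc.continuousOn.integrableOn_compact (isCompact_closedBall a M)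
  have hIΩ : IntegrableOn f Ω := hIcb.mono_set ((subset_union_left).trans hM)
  have hIB : IntegrableOn f B := hIcb.mono_set ((subset_union_right).trans hM)
  -- equal measures of the two differences
  have hkey : volume (B \ Ω) = volume (Ω \ B) := by
    have h1 := measure_inter_add_diff (μ := volume) B hΩ_meas
    have h2 := measure_inter_add_diff (μ := volume) Ω hmeasB
    have hinter : volume (Ω ∩ B) = volume (B ∩ Ω) := by rw [Set.inter_comm]
    have hfin : volume (B ∩ Ω) ≠ ⊤ :=
      ((measure_mono Set.inter_subset_left).trans_lt (hvolB ▸ hvolΩ_lt)).ne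
    have : volume (B ∩ Ω) + volume (B \ Ω) = volume (B ∩ Ω) + volume (Ω \ B) := by
      rw [h1, hvolB, ← h2, hinter]
    exact (ENNReal.add_right_inj hfin).mp this
  -- pointwise bounds
  have hub : ∀ x ∈ B \ Ω, f x ≤ R ^ 2 := by
    intro x hx
    have : ‖x - a‖ < R := by simpa [hB, dist_eq_norm] using hx.1
    exact pow_le_pow_left₀ (norm_nonneg _) this.le 2
  have hlb : ∀ x ∈ Ω \ B, R ^ 2 ≤ f x := by
    intro x hx
    have : R ≤ ‖x - a‖ := by
      have := hx.2
      simp only [hB, Metric.mem_ball, not_lt, dist_eq_norm] at this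
      exact this
    exact pow_le_pow_left₀ hR.le this 2
  have hfinBd : volume (B \ Ω) < ⊤ := (measure_mono Set.diff_subset).trans_lt measure_ball_lt_top
  have hfinΩd : volume (Ω \ B) < ⊤ := (measure_mono Set.diff_subset).trans_lt hvolΩ_lt
  -- the integral over B equals the ball moment
  have htrans : ∫ x in B, f x = (n / (n + 2) : ℝ) * R ^ 2 * (volume Ω).toReal := by
    have : ∫ x in B, f x = ∫ x in Metric.ball (0 : EuclideanSpace ℝ (Fin n)) R, ‖x‖ ^ 2 := by
      rw [← integral_indicator hmeasB, ← integral_indicator measurableSet_ball]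
      have : ∀ x, Set.indicator B f x
          = Set.indicator (Metric.ball (0 : EuclideanSpace ℝ (Fin n)) R)
            (fun y => ‖y‖ ^ 2) (x - a) := by
        intro x
        by_cases h : x ∈ B
        · have h' : x - a ∈ Metric.ball (0 : EuclideanSpace ℝ (Fin n)) R := by
            simpa [mem_ball_zero_iff, dist_eq_norm, hB] using h
          rw [Set.indicator_of_mem h, Set.indicator_of_mem h']
        · have h' : x - a ∉ Metric.ball (0 : EuclideanSpace ℝ (Fin n)) R := by
            simpa [mem_ball_zero_iff, dist_eq_norm, hB] using h
          rw [Set.indicator_of_notMem h, Set.indicator_of_notMem h']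
      rw [funext this, integral_sub_right_eq_self _ a]
    rw [this, ballMoment n hn R hR, hvol]
  -- compare integrals over the two differences
  have hB_diff : ∫ x in B \ Ω, f x ≤ R ^ 2 * (volume (B \ Ω)).toReal := by
    have := setIntegral_mono_on (hIB.mono_set Set.diff_subset)
      (integrableOn_const hfinBd.ne) (hmeasB.diff hΩ_meas) hub
    refine this.trans_eq ?_
    rw [setIntegral_const, smul_eq_mul, mul_comm, measureReal_def]
  have hΩ_diff : R ^ 2 * (volume (Ω \ B)).toReal ≤ ∫ x in Ω \ B, f x := by
    have := setIntegral_mono_on (integrableOn_const hfinΩd.ne)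
      (hIΩ.mono_set Set.diff_subset) (hΩ_meas.diff hmeasB) hlb
    calc R ^ 2 * (volume (Ω \ B)).toReal = ∫ _ in Ω \ B, R ^ 2 := by
          rw [setIntegral_const, smul_eq_mul, mul_comm, measureReal_def]
      _ ≤ _ := this
  calc (n / (n + 2) : ℝ) * R ^ 2 * (volume Ω).toReal
      = ∫ x in B, f x := htrans.symm
    _ = (∫ x in B ∩ Ω, f x) + ∫ x in B \ Ω, f x := (integral_inter_add_diff hΩ_meas hIB).symm
    _ ≤ (∫ x in B ∩ Ω, f x) + R ^ 2 * (volume (B \ Ω)).toReal := by linarith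
    _ = (∫ x in Ω ∩ B, f x) + R ^ 2 * (volume (Ω \ B)).toReal := by
        rw [Set.inter_comm, hkey]
    _ ≤ (∫ x in Ω ∩ B, f x) + ∫ x in Ω \ B, f x := by linarith
    _ = ∫ x in Ω, f x := integral_inter_add_diff hmeasB hIΩ
end

section
/- Let n ≥ 2, λ > 0, J₁ > 0, and let t₀ < √λ satisfy t₀ + J₁ > √λ and λ[(t₀+J₁)ⁿ − t₀ⁿ]/n = [(t₀+J₁)^(n+2) − t₀^(n+2)]/(n+2). Then t₀ < √λ − J₁/2. -/
open Real

theorem stmt9 (n : ℕ) (hn : 2 ≤ n) (lam J₁ t₀ : ℝ) (hlam : 0 < lam) (hJ : 0 < J₁)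
    (ht1 : t₀ < Real.sqrt lam) (ht2 : Real.sqrt lam < t₀ + J₁)
    (ht3 : lam * ((t₀ + J₁) ^ n - t₀ ^ n) / n
        = ((t₀ + J₁) ^ (n + 2) - t₀ ^ (n + 2)) / (n + 2)) :
    t₀ < Real.sqrt lam - J₁ / 2 := by
  obtain ⟨m, rfl⟩ : ∃ m, n = m + 2 := ⟨n - 2, by omega⟩
  by_contra hcon
  push_neg at hcon
  set c := Real.sqrt lam with hcdef
  have hc : 0 < c := Real.sqrt_pos.mpr hlam
  have hc2 : c ^ 2 = lam := Real.sq_sqrt hlam.le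
  set φ : ℝ → ℝ := fun r => ((m:ℝ)+4)*lam*r^(m+2) - ((m:ℝ)+2)*r^(m+4) with hφdef
  have hderiv : ∀ r : ℝ, HasDerivAt φ
      (((m:ℝ)+2)*((m:ℝ)+4)*r^(m+1)*(lam - r^2)) r := by
    intro r
    have h1 : HasDerivAt (fun x : ℝ => ((m:ℝ)+4)*lam*x^(m+2))
        (((m:ℝ)+4)*lam*((m+2)*r^(m+1))) r := by
      have := (hasDerivAt_pow (m+2) r).const_mul (((m:ℝ)+4)*lam)
      simpa using this
    have h2 : HasDerivAt (fun x : ℝ => ((m:ℝ)+2)*x^(m+4))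
        (((m:ℝ)+2)*((m+4)*r^(m+3))) r := by
      have := (hasDerivAt_pow (m+4) r).const_mul ((m:ℝ)+2)
      simpa using this
    have := h1.sub h2
    refine this.congr_deriv ?_
    push_cast
    have : r^(m+3) = r^(m+1) * r^2 := by ring
    rw [this]; ring
  -- φ equality from ht3
  have hφeq : φ (t₀ + J₁) = φ t₀ := by
    have hn0 : ((m:ℝ)+2) ≠ 0 := by positivity
    have hn2 : ((m:ℝ)+4) ≠ 0 := by positivity
    field_simp at ht3
    push_cast at ht3
    simp only [hφdef]
    nlinarith [ht3]
  -- strict anti on Ici c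
  have hanti : StrictAntiOn φ (Set.Ici c) := by
    apply strictAntiOn_of_deriv_neg (convex_Ici c)
    · exact (Continuous.continuousOn (by fun_prop))
    · intro r hr
      rw [interior_Ici, Set.mem_Ioi] at hr
      rw [(hderiv r).deriv]
      have hrpos : 0 < r := hc.trans hr
      have : lam < r ^ 2 := by nlinarith [hr]
      have h1 : (0:ℝ) < ((m:ℝ)+2)*((m:ℝ)+4)*r^(m+1) := by positivity
      nlinarith
  -- reflection: g s = φ(c+s) - φ(c-s) strict anti on Ici 0
  have hg : StrictAntiOn (fun s => φ (c+s) - φ (c-s)) (Set.Ici (0:ℝ)) := by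
    apply strictAntiOn_of_deriv_neg (convex_Ici 0)
    · exact (Continuous.continuousOn (by fun_prop))
    · intro s hs
      rw [interior_Ici, Set.mem_Ioi] at hs
      have hd1 : HasDerivAt (fun s : ℝ => φ (c+s))
          (((m:ℝ)+2)*((m:ℝ)+4)*(c+s)^(m+1)*(lam - (c+s)^2)) s := by
        have := (hderiv (c+s)).comp s ((hasDerivAt_id s).const_add c)
        simpa [Function.comp_def] using this
      have hd2 : HasDerivAt (fun s : ℝ => φ (c-s))
          (-(((m:ℝ)+2)*((m:ℝ)+4)*(c-s)^(m+1)*(lam - (c-s)^2))) s := by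
        have := (hderiv (c-s)).comp s ((hasDerivAt_id s).const_sub c)
        simpa [Function.comp_def] using this
      rw [show (fun s => φ (c + s) - φ (c - s)) = ((fun s => φ (c + s)) - fun s => φ (c - s)) from rfl, (hd1.sub hd2).deriv]
      -- need: A*(c+s)^(m+1)*(lam-(c+s)^2) + A*(c-s)^(m+1)*(lam-(c-s)^2) < 0
      have key : (c-s)^(m+1)*(2*c-s) < (c+s)^(m+1)*(2*c+s) := by
        have habs1 : |c - s| ≤ c + s := by
          rw [abs_le]; constructor <;> linarith
        have habs2 : |2*c - s| < 2*c + s := by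
          rw [abs_lt]; constructor <;> linarith
        calc (c-s)^(m+1)*(2*c-s) ≤ |(c-s)^(m+1)*(2*c-s)| := le_abs_self _
          _ = |c-s|^(m+1) * |2*c-s| := by rw [abs_mul, abs_pow]
          _ ≤ (c+s)^(m+1) * |2*c-s| := by
              exact mul_le_mul_of_nonneg_right
                (pow_le_pow_left₀ (abs_nonneg _) habs1 _) (abs_nonneg _)
          _ < (c+s)^(m+1) * (2*c+s) := by
              exact mul_lt_mul_of_pos_left habs2 (pow_pos (by linarith) _)
      have e1 : lam - (c+s)^2 = -(s*(2*c+s)) := by nlinarith [hc2]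
      have e2 : lam - (c-s)^2 = s*(2*c-s) := by nlinarith [hc2]
      rw [e1, e2]
      have hA : (0:ℝ) < ((m:ℝ)+2)*((m:ℝ)+4) := by positivity
      nlinarith [mul_pos hA hs, key]
  -- conclude
  set s₁ := c - t₀ with hs1
  set s₂ := t₀ + J₁ - c with hs2
  have hs1p : 0 < s₁ := by simp [hs1]; linarith
  have hs2p : 0 < s₂ := by simp [hs2]; linarith
  have hs12 : s₁ ≤ s₂ := by simp [hs1, hs2]; linarith
  have h1 : φ (c + s₂) ≤ φ (c + s₁) := by
    rcases eq_or_lt_of_le hs12 with h | h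
    · rw [h]
    · exact (hanti (by simp; linarith) (by simp; linarith) (by linarith)).le
  have h2 : φ (c + s₁) < φ (c - s₁) := by
    have := hg (Set.self_mem_Ici) (Set.mem_Ici.mpr hs1p.le) hs1p
    simpa using this
  have e1 : c + s₂ = t₀ + J₁ := by simp [hs2]
  have e2 : c - s₁ = t₀ := by simp [hs1]
  rw [e1] at h1
  rw [e2] at h2
  linarith [hφeq, h1, h2]
end
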